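/- Under the symmetric MS-selection policy, for every q ∈ 𝒬 it holds that Σ_{j ∈ 𝒬, j ≠ q} M_{q,j} = M·(Q − Q̄ − 1)·(Q − Q̄)/Q. -/

import Mathlib

open scoped Classical

/-- The unique representative in `{1, …, M}` of `j` modulo `M` (for `j ≥ 1`). -/
def sigmaRep (M j : ℕ) : ℕ := (j - 1) % M + 1

/-- The index `m ∈ {1, …, M}` of the block `𝒬_m = {(m−1)L+1, …, mL}` containing `q`. -/
def blk (L q : ℕ) : ℕ := (q - 1) / L + 1

/-- `q ∈ S̄_m = ⋃_{i=1}^{K} 𝒬_{σ(i+m)}`: MS-`q` is discarded by S-RRH-`m`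
under the symmetric MS-selection policy. -/
def discardedBy (M L K m q : ℕ) : Prop :=
  ∃ i ∈ Finset.Icc 1 K, blk L q = sigmaRep M (i + m)

/-- S-RRH-`m` serves MS-`q`. -/
def servesMS (M L K m q : ℕ) : Prop := ¬ discardedBy M L K m q

/-- `M_q`: the number of S-RRHs serving MS-`q`. -/
noncomputable def numServing (M L K q : ℕ) : ℕ :=
  ((Finset.Icc 1 M).filter fun m => servesMS M L K m q).card

/-- `M_{q,j}`: the number of S-RRHs serving both MS-`q` and MS-`j`. -/
noncomputable def numServingBoth (M L K q j : ℕ) : ℕ :=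
  ((Finset.Icc 1 M).filter fun m => servesMS M L K m q ∧ servesMS M L K m j).card

lemma eq_of_mod_eq_le {M a b : ℕ} (h : a % M = b % M) (h2 : a ≤ b) (h3 : b < a + M) :
    a = b := by
  have hd := (Nat.modEq_iff_dvd' h2).mp h
  rcases Nat.eq_or_lt_of_le h2 with h' | hlt
  · exact h'
  · exfalso
    have := Nat.le_of_dvd (by omega) hd
    omega

lemma eq_of_mod_eq {M a b : ℕ} (h : a % M = b % M) (hab : b < a + M) (hba : a < b + M) :
    a = b := by
  rcases le_total a b with hle | hle
  · exact eq_of_mod_eq_le h hle hab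
  · exact (eq_of_mod_eq_le h.symm hle hba).symm

lemma sigmaRep_mem {M : ℕ} (hM : 0 < M) (x : ℕ) : sigmaRep M x ∈ Finset.Icc 1 M := by
  have := Nat.mod_lt (x - 1) hM
  simp only [sigmaRep, Finset.mem_Icc]
  omega

lemma count_unique {M : ℕ} (hM : 0 < M) (c r : ℕ) (hr : r < M) :
    ((Finset.Icc 1 M).filter fun m => (c + m) % M = r).card = 1 := by
  rw [Finset.card_eq_one]
  refine ⟨sigmaRep M (r + M - c % M), ?_⟩
  rw [Finset.eq_singleton_iff_unique_mem, Finset.mem_filter]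
  have hmem := sigmaRep_mem hM (r + M - c % M)
  have hcm : c % M < M := Nat.mod_lt c hM
  have hval : (c + sigmaRep M (r + M - c % M)) % M = r := by
    unfold sigmaRep
    have hMd : M * (c / M + 1) = M * (c / M) + M := by ring
    have hdm := Nat.div_add_mod c M
    calc (c + ((r + M - c % M - 1) % M + 1)) % M
        = (c + ((r + M - c % M - 1) + 1)) % M :=
          ((Nat.mod_modEq (r + M - c % M - 1) M).add_right 1).add_left c
      _ = (r + M * (c / M + 1)) % M := by congr 1; omega
      _ = r % M := Nat.add_mul_mod_self_left r M (c / M + 1)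
      _ = r := Nat.mod_eq_of_lt hr
  refine ⟨⟨hmem, hval⟩, ?_⟩
  intro m hm
  rw [Finset.mem_filter, Finset.mem_Icc] at hm
  simp only [Finset.mem_Icc] at hmem
  have : c + m = c + sigmaRep M (r + M - c % M) :=
    eq_of_mod_eq (by rw [hm.2, hval]) (by omega) (by omega)
  omega

lemma blk_fiber {M L b : ℕ} (hL : 0 < L) (hb1 : 1 ≤ b) (hbM : b ≤ M) :
    ((Finset.Icc 1 (M * L)).filter fun j => blk L j = b).card = L := by
  have hbl : (b - 1) * L + L = b * L := by
    have hb : b - 1 + 1 = b := by omega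
    calc (b - 1) * L + L = (b - 1 + 1) * L := by ring
      _ = b * L := by rw [hb]
  have hml : b * L ≤ M * L := Nat.mul_le_mul_right L hbM
  have key : ((Finset.Icc 1 (M * L)).filter fun j => blk L j = b)
      = Finset.Icc ((b - 1) * L + 1) ((b - 1) * L + L) := by
    ext j
    simp only [Finset.mem_filter, Finset.mem_Icc]
    simp only [blk]
    constructor
    · rintro ⟨⟨h1, h2⟩, h3⟩
      have hdiv : (j - 1) / L = b - 1 := by omega
      have h4 : (b - 1) * L ≤ j - 1 := by
        calc (b - 1) * L = (j - 1) / L * L := by rw [hdiv]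
          _ ≤ j - 1 := Nat.div_mul_le_self _ _
      have h5 : j - 1 < b * L := by
        rw [← Nat.div_lt_iff_lt_mul hL, hdiv]; omega
      omega
    · rintro ⟨h1, h2⟩
      have h4 : (b - 1) * L ≤ j - 1 := by omega
      have h5 : j - 1 < (b - 1 + 1) * L := by
        have : (b - 1 + 1) * L = (b - 1) * L + L := by ring
        omega
      have hdiv : (j - 1) / L = b - 1 := Nat.div_eq_of_lt_le h4 h5
      refine ⟨⟨by omega, by omega⟩, by omega⟩
  rw [key, Nat.card_Icc]
  omega

lemma discarded_card {M L K : ℕ} (hM : 0 < M) (hL : 0 < L) (hK : K ≤ M) (m : ℕ) :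
    ((Finset.Icc 1 (M * L)).filter fun j => discardedBy M L K m j).card = K * L := by
  classical
  set T := (Finset.Icc 1 K).image fun i => sigmaRep M (i + m) with hT
  have hTsub : ∀ b ∈ T, 1 ≤ b ∧ b ≤ M := by
    intro b hb
    rw [hT, Finset.mem_image] at hb
    obtain ⟨i, _, rfl⟩ := hb
    have := sigmaRep_mem hM (i + m)
    simpa [Finset.mem_Icc] using this
  have hset : ((Finset.Icc 1 (M * L)).filter fun j => discardedBy M L K m j)
      = T.biUnion fun b => (Finset.Icc 1 (M * L)).filter fun j => blk L j = b := by
    ext j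
    simp only [Finset.mem_filter, Finset.mem_biUnion, hT, Finset.mem_image]
    simp only [discardedBy]
    constructor
    · rintro ⟨hj, i, hi, hbi⟩
      exact ⟨sigmaRep M (i + m), ⟨i, hi, rfl⟩, hj, hbi⟩
    · rintro ⟨b, ⟨i, hi, rfl⟩, hj, hb⟩
      exact ⟨hj, i, hi, hb⟩
  rw [hset, Finset.card_biUnion]
  · have hconst : ∀ b ∈ T, ((Finset.Icc 1 (M * L)).filter fun j => blk L j = b).card = L :=
      fun b hb => blk_fiber hL (hTsub b hb).1 (hTsub b hb).2
    rw [Finset.sum_congr rfl hconst, Finset.sum_const, smul_eq_mul]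
    congr 1
    rw [hT, Finset.card_image_of_injOn, Nat.card_Icc]
    · omega
    · intro i hi i' hi' h
      simp only [Finset.mem_Icc, Finset.coe_Icc, Set.mem_Icc] at hi hi'
      unfold sigmaRep at h
      simp only at h
      have hmod : (i + m - 1) % M = (i' + m - 1) % M := by omega
      have := eq_of_mod_eq hmod (by omega) (by omega)
      omega
  · intro b hb b' hb' hne
    apply Finset.disjoint_left.mpr
    intro j hj hj'
    rw [Finset.mem_filter] at hj hj'
    exact hne (by rw [← hj.2, hj'.2])

lemma served_card {M L K : ℕ} (hM : 0 < M) (hL : 0 < L) (hK : K ≤ M) (m : ℕ) :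
    ((Finset.Icc 1 (M * L)).filter fun j => servesMS M L K m j).card = M * L - K * L := by
  have h1 := discarded_card hM hL hK m
  have h2 : ((Finset.Icc 1 (M * L)).filter fun j => servesMS M L K m j)
      = Finset.Icc 1 (M * L) \ ((Finset.Icc 1 (M * L)).filter fun j => discardedBy M L K m j) := by
    ext x
    simp only [Finset.mem_filter, Finset.mem_sdiff]
    simp only [servesMS]
    tauto
  rw [h2, Finset.card_sdiff_of_subset (Finset.filter_subset _ _), h1, Nat.card_Icc]
  omega

lemma discarding_card {M L K q : ℕ} (hM : 0 < M) (hL : 0 < L) (hK : K ≤ M)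
    (hq1 : 1 ≤ q) (hq2 : q ≤ M * L) :
    ((Finset.Icc 1 M).filter fun m => discardedBy M L K m q).card = K := by
  have hb1 : 1 ≤ blk L q := by simp [blk]
  have hbM : blk L q ≤ M := by
    have : (q - 1) / L < M := (Nat.div_lt_iff_lt_mul hL).mpr (by omega)
    simp only [blk]; omega
  set b := blk L q with hbdef
  have hset : ((Finset.Icc 1 M).filter fun m => discardedBy M L K m q)
      = (Finset.Icc 1 K).biUnion fun i =>
          (Finset.Icc 1 M).filter fun m => ((i - 1) + m) % M = b - 1 := by
    ext m
    simp only [Finset.mem_filter, Finset.mem_biUnion, discardedBy, ← hbdef]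
    constructor
    · rintro ⟨hm, i, hi, hbi⟩
      refine ⟨i, hi, hm, ?_⟩
      rw [Finset.mem_Icc] at hi
      unfold sigmaRep at hbi
      have heq : i + m - 1 = (i - 1) + m := by omega
      rw [heq] at hbi
      omega
    · rintro ⟨i, hi, hm, hmod⟩
      refine ⟨hm, i, hi, ?_⟩
      rw [Finset.mem_Icc] at hi
      unfold sigmaRep
      have heq : i + m - 1 = (i - 1) + m := by omega
      rw [heq]
      omega
  rw [hset, Finset.card_biUnion]
  · have hconst : ∀ i ∈ Finset.Icc 1 K,
        ((Finset.Icc 1 M).filter fun m => ((i - 1) + m) % M = b - 1).card = 1 :=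
      fun i _ => count_unique hM (i - 1) (b - 1) (by omega)
    rw [Finset.sum_congr rfl hconst, Finset.sum_const, smul_eq_mul, Nat.card_Icc]
    omega
  · intro i hi i' hi' hne
    rw [Finset.mem_coe, Finset.mem_Icc] at hi hi'
    apply Finset.disjoint_left.mpr
    intro m hm hm'
    rw [Finset.mem_filter, Finset.mem_Icc] at hm hm'
    have hmod : ((i - 1) + m) % M = ((i' - 1) + m) % M := by rw [hm.2, hm'.2]
    have := eq_of_mod_eq hmod (by omega) (by omega)
    exact hne (by omega)

lemma serves_card {M L K q : ℕ} (hM : 0 < M) (hL : 0 < L) (hK : K ≤ M)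
    (hq1 : 1 ≤ q) (hq2 : q ≤ M * L) :
    ((Finset.Icc 1 M).filter fun m => servesMS M L K m q).card = M - K := by
  have h1 := discarding_card hM hL hK hq1 hq2
  have h2 : ((Finset.Icc 1 M).filter fun m => servesMS M L K m q)
      = Finset.Icc 1 M \ ((Finset.Icc 1 M).filter fun m => discardedBy M L K m q) := by
    ext x
    simp only [Finset.mem_filter, Finset.mem_sdiff]
    simp only [servesMS]
    tauto
  rw [h2, Finset.card_sdiff_of_subset (Finset.filter_subset _ _), h1, Nat.card_Icc]
  omega

/-- Under the symmetric MS-selection policy,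
`Σ_{j ≠ q} M_{q,j} = M·(Q − Q̄ − 1)·(Q − Q̄)/Q`. -/
theorem stmt_18 (M Q Qbar L K : ℕ) (hM : 0 < M) (hQ : 0 < Q) (hQbar : 0 < Qbar)
    (hlt : Qbar < Q) (hL : Q = M * L) (hK : K * Q = M * Qbar) :
    ∀ q ∈ Finset.Icc 1 Q,
      (∑ j ∈ (Finset.Icc 1 Q).erase q, (numServingBoth M L K q j : ℚ)) =
        (M : ℚ) * ((Q : ℚ) - (Qbar : ℚ) - 1) * ((Q : ℚ) - (Qbar : ℚ)) / (Q : ℚ) := by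
  intro q hq
  rw [Finset.mem_Icc] at hq
  have hL0 : 0 < L := by
    rcases Nat.eq_zero_or_pos L with h | h
    · subst h; omega
    · exact h
  have hKM : K < M := by
    by_contra h
    push_neg at h
    have h1 : M * Qbar < M * Q := by exact (Nat.mul_lt_mul_left hM).mpr hlt
    have h2 : M * Q ≤ K * Q := Nat.mul_le_mul_right Q h
    omega
  have hQb : Qbar = K * L := by
    have h1 : M * Qbar = M * (K * L) := by rw [← hK, hL]; ring
    exact Nat.eq_of_mul_eq_mul_left hM h1
  subst hL
  subst hQb
  -- natural-number computation of the sum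
  have key : (∑ j ∈ (Finset.Icc 1 (M * L)).erase q, numServingBoth M L K q j)
      = (M - K) * (M * L - K * L - 1) := by
    unfold numServingBoth
    rw [Finset.sum_congr rfl fun j _ => Finset.card_filter _ _, Finset.sum_comm]
    have inner : ∀ m ∈ Finset.Icc 1 M,
        (∑ j ∈ (Finset.Icc 1 (M * L)).erase q,
          if servesMS M L K m q ∧ servesMS M L K m j then 1 else 0)
        = if servesMS M L K m q then M * L - K * L - 1 else 0 := by
      intro m _
      by_cases hs : servesMS M L K m q
      · have hsimp : ∀ j, (if servesMS M L K m q ∧ servesMS M L K m j then (1:ℕ) else 0)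
            = if servesMS M L K m j then 1 else 0 := by
          intro j; simp [hs]
        rw [Finset.sum_congr rfl fun j _ => hsimp j, ← Finset.card_filter, if_pos hs]
        rw [Finset.filter_erase, Finset.card_erase_of_mem, served_card hM hL0 hKM.le]
        rw [Finset.mem_filter, Finset.mem_Icc]
        exact ⟨⟨hq.1, hq.2⟩, hs⟩
      · rw [if_neg hs]
        apply Finset.sum_eq_zero
        intro j _
        simp [hs]
    rw [Finset.sum_congr rfl inner, ← Finset.sum_filter, Finset.sum_const, smul_eq_mul,
      serves_card hM hL0 hKM.le hq.1 hq.2]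
  have hcast : (∑ j ∈ (Finset.Icc 1 (M * L)).erase q, (numServingBoth M L K q j : ℚ))
      = (((M - K) * (M * L - K * L - 1) : ℕ) : ℚ) := by
    rw [← key]; push_cast; rfl
  rw [hcast]
  have hKL : K * L + 1 ≤ M * L := by
    have h1 : (K + 1) * L ≤ M * L := Nat.mul_le_mul_right L hKM
    have h2 : K * L + L = (K + 1) * L := by ring
    omega
  have hMK : K * L ≤ M * L := by omega
  rw [Nat.cast_mul, Nat.cast_sub hKM.le,
    Nat.cast_sub (show (1:ℕ) ≤ M * L - K * L by omega), Nat.cast_sub hMK]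
  have hM0 : (M : ℚ) ≠ 0 := Nat.cast_ne_zero.mpr (by omega)
  have hL1 : (L : ℚ) ≠ 0 := Nat.cast_ne_zero.mpr (by omega)
  push_cast
  field_simp
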